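/- If a group π satisfies Property N, then π is principal; that is, for all finite subsets S, S' ⊆ π, the index of the subgroup Z(S) ∩ Z(S') in Z(S) is either 1 or infinite. -/

import Mathlib

/-- A group satisfying Property N is principal: for all finite subsets
`S, S' ⊆ π`, the index of `Z(S) ∩ Z(S')` in `Z(S)` is either `1` or infinite
(infinite index is encoded by relative index `0`). -/
theorem stmt2 {π : Type*} [Group π]
    (hN : ∀ (a : π) (S : Finset π) (n : ℕ), 1 ≤ n →
      a ^ n ∈ Subgroup.centralizer (S : Set π) → a ∈ Subgroup.centralizer (S : Set π)) :
    ∀ S S' : Finset π,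
      (Subgroup.centralizer (S : Set π) ⊓ Subgroup.centralizer (S' : Set π)).relIndex
          (Subgroup.centralizer (S : Set π)) = 1 ∨
      (Subgroup.centralizer (S : Set π) ⊓ Subgroup.centralizer (S' : Set π)).relIndex
          (Subgroup.centralizer (S : Set π)) = 0 := by
  intro S S'
  by_cases h : (Subgroup.centralizer (S : Set π) ⊓ Subgroup.centralizer (S' : Set π)).relIndex
      (Subgroup.centralizer (S : Set π)) = 0
  · exact Or.inr h
  · left
    rw [Subgroup.relIndex_eq_one]
    intro a ha
    obtain ⟨n, hn0, _, hmem⟩ := Subgroup.exists_pow_mem_of_relIndex_ne_zero h ha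
    refine ⟨ha, ?_⟩
    exact hN a S' n hn0 hmem.1.2
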